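/- Let w, h ≥ 1 be natural numbers and let S be a set of n points of ℤ² contained in {0, 1, …, w} × {0, 1, …, h}. Then there exists a map φ : S → ℤ² whose images lie in {0, 1, …, N} × {0, 1, …, N} with N = 16·h⁴·w⁴·(n⁴ + n), such that: (1) no three points of φ(S) are collinear; (2) for every triple of points p, q, r ∈ S that is not collinear, the orientation of (p, q, r) equals the orientation of (φ(p), φ(q), φ(r)); and (3) for any two distinct points p, q ∈ S, φ(p) and φ(q) have different x-coordinates and different y-coordinates. -/

import Mathlib

/-- The determinant `det (b - a, c - a)` whose sign is the orientation of `(a, b, c)`;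
the triple is collinear iff this determinant vanishes. -/
def iorientDet (a b c : ℤ × ℤ) : ℤ :=
  (b.1 - a.1) * (c.2 - a.2) - (b.2 - a.2) * (c.1 - a.1)

lemma expandDet (M a b c : ℤ) (p q r : ℤ × ℤ) :
    iorientDet (M*p.1+a, M*p.2+a^2) (M*q.1+b, M*q.2+b^2) (M*r.1+c, M*r.2+c^2)
    = M^2 * iorientDet p q r
      + M * ((q.1-p.1)*(c^2-a^2) + (b-a)*(r.2-p.2) - (q.2-p.2)*(c-a) - (b^2-a^2)*(r.1-p.1))
      + (b-a)*(c-a)*(c-b) := by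
  simp only [iorientDet]; ring

lemma coreLem (B n3 M D E F : ℤ) (hB : 0 ≤ B) (hn3 : 0 ≤ n3)
    (hM : M = B + n3 + 1) (hE : |E| ≤ B) (hF : |F| ≤ n3) (hF0 : F ≠ 0) :
    M^2*D + M*E + F ≠ 0 ∧ (D ≠ 0 → Int.sign (M^2*D + M*E + F) = Int.sign D) := by
  have hM1 : 1 ≤ M := by linarith
  obtain ⟨hE1, hE2⟩ := abs_le.mp hE
  obtain ⟨hF1, hF2⟩ := abs_le.mp hF
  have hME1 : M*E ≤ M*B := mul_le_mul_of_nonneg_left hE2 (by linarith)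
  have hME2 : M*(-B) ≤ M*E := mul_le_mul_of_nonneg_left hE1 (by linarith)
  have hsq : M^2 = M*B + M*n3 + M := by rw [hM]; ring
  have hn3M : n3 ≤ M*n3 := le_mul_of_one_le_left hn3 hM1
  rcases lt_trichotomy D 0 with hD | rfl | hD
  · have hD1 : D ≤ -1 := by omega
    have : M^2*D ≤ M^2*(-1) := mul_le_mul_of_nonneg_left hD1 (by positivity)
    have hneg : M^2*D + M*E + F < 0 := by nlinarith
    exact ⟨ne_of_lt hneg, fun _ => by
      rw [Int.sign_eq_neg_one_of_neg hneg, Int.sign_eq_neg_one_of_neg hD]⟩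
  · constructor
    · intro h0
      rcases eq_or_ne E 0 with rfl | hE0
      · simp at h0; omega
      · have h1 : 1 ≤ |E| := Int.one_le_abs hE0
        have h2 : F = -(M*E) := by linarith [h0]
        have : |F| = M * |E| := by
          rw [h2, abs_neg, abs_mul, abs_of_pos (by linarith : (0:ℤ) < M)]
        nlinarith
    · intro h; simp at h
  · have hD1 : 1 ≤ D := by omega
    have : M^2*1 ≤ M^2*D := mul_le_mul_of_nonneg_left hD1 (by positivity)
    have hpos : 0 < M^2*D + M*E + F := by nlinarith
    exact ⟨ne_of_gt hpos, fun _ => by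
      rw [Int.sign_eq_one_of_pos hpos, Int.sign_eq_one_of_pos hD]⟩

lemma degen1 (p r : ℤ × ℤ) : iorientDet p p r = 0 := by simp [iorientDet]
lemma degen2 (p q : ℤ × ℤ) : iorientDet p q p = 0 := by simp [iorientDet]
lemma degen3 (p q : ℤ × ℤ) : iorientDet p q q = 0 := by simp [iorientDet]; ring

lemma keyIneq (w h n t : ℤ) (hw : 1 ≤ w) (hh : 1 ≤ h) (hn : 1 ≤ n)
    (ht : 0 ≤ t) (htm : t ≤ w ∨ t ≤ h) :
    (2*w*n^2 + 2*h*n + n^3 + 1) * t + n^2 ≤ 16*h^4*w^4*(n^4+n) := by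
  have hw0 : (0:ℤ) ≤ w := by linarith
  have hh0 : (0:ℤ) ≤ h := by linarith
  have hn0 : (0:ℤ) ≤ n := by linarith
  have hn3 : (1:ℤ) ≤ n^3 := by
    have := pow_le_pow_left₀ (by norm_num : (0:ℤ) ≤ 1) hn 3
    simpa using this
  have hM6 : 2*w*n^2 + 2*h*n + n^3 + 1 ≤ 6*w*h*n^3 := by
    nlinarith [mul_nonneg (mul_nonneg hw0 (sq_nonneg n)) (by nlinarith : (0:ℤ) ≤ h*n - 1),
      mul_nonneg hn0 (by nlinarith : (0:ℤ) ≤ w*n^2 - 1),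
      mul_nonneg (mul_nonneg hw0 hh0) (by nlinarith : (0:ℤ) ≤ n^3 - 1),
      mul_nonneg hw0 hh0, mul_nonneg hh0 hn0]
  have htwh : t ≤ w*h := by
    rcases htm with h1 | h1
    · nlinarith
    · nlinarith
  have h2 : (2*w*n^2 + 2*h*n + n^3 + 1) * t ≤ (6*w*h*n^3) * (w*h) := by
    have := mul_le_mul hM6 htwh ht (by positivity)
    linarith
  have h3 : w^2*h^2*n^3 ≤ h^4*w^4*n^4 := by
    have e1 : w^2 ≤ w^4 := by nlinarith [sq_nonneg w, sq_nonneg (w^2 - w)]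
    have e2 : h^2 ≤ h^4 := by nlinarith [sq_nonneg h, sq_nonneg (h^2 - h)]
    have e3 : n^3 ≤ n^4 := by nlinarith [pow_pos (by linarith : (0:ℤ) < n) 3]
    calc w^2*h^2*n^3 ≤ w^4*h^4*n^4 := by
          apply mul_le_mul (mul_le_mul e1 e2 (by positivity) (by positivity)) e3 (by positivity) (by positivity)
      _ = h^4*w^4*n^4 := by ring
  have h4 : n^2 ≤ w^2*h^2*n^3 := by
    have hw2 : (1:ℤ) ≤ w^2 := by nlinarith
    have hh2 : (1:ℤ) ≤ h^2 := by nlinarith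
    have hwh2 : (1:ℤ) ≤ w^2*h^2 := by nlinarith [mul_le_mul hw2 hh2 zero_le_one (by positivity : (0:ℤ) ≤ w^2)]
    have hwhn : (1:ℤ) ≤ w^2*h^2*n := by nlinarith [mul_le_mul hwh2 hn zero_le_one (by positivity : (0:ℤ) ≤ w^2*h^2)]
    nlinarith [mul_nonneg (sq_nonneg n) (by linarith : (0:ℤ) ≤ w^2*h^2*n - 1)]
  have h5 : (0:ℤ) ≤ 16*h^4*w^4*n := by positivity
  nlinarith [h2, h3, h4, h5]

lemma absMulLe {x y X Y : ℤ} (hx : |x| ≤ X) (hy : |y| ≤ Y) : |x*y| ≤ X*Y := by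
  rw [abs_mul]
  exact mul_le_mul hx hy (abs_nonneg _) (le_trans (abs_nonneg _) hx)

set_option maxHeartbeats 1000000 in
lemma absELem (w h n a b c : ℤ) (p q r : ℤ × ℤ)
    (hp : 0 ≤ p.1 ∧ p.1 ≤ w ∧ 0 ≤ p.2 ∧ p.2 ≤ h)
    (hq : 0 ≤ q.1 ∧ q.1 ≤ w ∧ 0 ≤ q.2 ∧ q.2 ≤ h)
    (hr : 0 ≤ r.1 ∧ r.1 ≤ w ∧ 0 ≤ r.2 ∧ r.2 ≤ h)
    (ha : 0 ≤ a ∧ a ≤ n) (hb : 0 ≤ b ∧ b ≤ n) (hc : 0 ≤ c ∧ c ≤ n) :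
    |(q.1-p.1)*(c^2-a^2) + (b-a)*(r.2-p.2) - (q.2-p.2)*(c-a) - (b^2-a^2)*(r.1-p.1)|
      ≤ 2*w*n^2 + 2*h*n := by
  have hqp1 : |q.1 - p.1| ≤ w := abs_le.mpr ⟨by linarith [hp.1, hq.2.1], by linarith [hq.1, hp.2.1]⟩
  have hqp2 : |q.2 - p.2| ≤ h := abs_le.mpr ⟨by linarith [hp.2.2.1, hq.2.2.2], by linarith [hq.2.2.1, hp.2.2.2]⟩
  have hrp1 : |r.1 - p.1| ≤ w := abs_le.mpr ⟨by linarith [hp.1, hr.2.1], by linarith [hr.1, hp.2.1]⟩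
  have hrp2 : |r.2 - p.2| ≤ h := abs_le.mpr ⟨by linarith [hp.2.2.1, hr.2.2.2], by linarith [hr.2.2.1, hp.2.2.2]⟩
  have hca : |c - a| ≤ n := abs_le.mpr ⟨by linarith [ha.1, hc.2], by linarith [hc.1, ha.2]⟩
  have hba : |b - a| ≤ n := abs_le.mpr ⟨by linarith [ha.1, hb.2], by linarith [hb.1, ha.2]⟩
  have hsq : ∀ x : ℤ, 0 ≤ x → x ≤ n → x^2 ≤ n^2 := fun x h1 h2 => by nlinarith
  have hca2 : |c^2 - a^2| ≤ n^2 := abs_le.mpr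
    ⟨by nlinarith [hsq a ha.1 ha.2, sq_nonneg c], by nlinarith [hsq c hc.1 hc.2, sq_nonneg a]⟩
  have hba2 : |b^2 - a^2| ≤ n^2 := abs_le.mpr
    ⟨by nlinarith [hsq a ha.1 ha.2, sq_nonneg b], by nlinarith [hsq b hb.1 hb.2, sq_nonneg a]⟩
  have t1 := absMulLe hqp1 hca2
  have t2 := absMulLe hba hrp2
  have t3 := absMulLe hqp2 hca
  have t4 := absMulLe hba2 hrp1
  calc |(q.1-p.1)*(c^2-a^2) + (b-a)*(r.2-p.2) - (q.2-p.2)*(c-a) - (b^2-a^2)*(r.1-p.1)|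
      ≤ |(q.1-p.1)*(c^2-a^2) + (b-a)*(r.2-p.2) - (q.2-p.2)*(c-a)| + |(b^2-a^2)*(r.1-p.1)| :=
        abs_sub _ _
    _ ≤ (|(q.1-p.1)*(c^2-a^2) + (b-a)*(r.2-p.2)| + |(q.2-p.2)*(c-a)|) + |(b^2-a^2)*(r.1-p.1)| :=
        add_le_add_left (abs_sub _ _) _
    _ ≤ ((|(q.1-p.1)*(c^2-a^2)| + |(b-a)*(r.2-p.2)|) + |(q.2-p.2)*(c-a)|) + |(b^2-a^2)*(r.1-p.1)| :=
        add_le_add_left (add_le_add_left (abs_add_le _ _) _) _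
    _ ≤ ((w*n^2 + n*h) + h*n) + n^2*w := by
        exact add_le_add (add_le_add (add_le_add t1 t2) t3) t4
    _ ≤ 2*w*n^2 + 2*h*n := by nlinarith [sq_nonneg n]


set_option maxHeartbeats 1000000 in
/-- A set `S` of `n` integer points inside the grid `{0,…,w} × {0,…,h}` can be mapped
into the grid `{0,…,N} × {0,…,N}`, with `N = 16 h⁴ w⁴ (n⁴ + n)`, so that (1) no three
image points are collinear, (2) the orientation of every non-collinear triple is
preserved, and (3) images of distinct points differ in both coordinates. -/
theorem stmt11 (w h n : ℕ) (hw : 1 ≤ w) (hh : 1 ≤ h)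
    (S : Finset (ℤ × ℤ)) (hcard : S.card = n)
    (hS : ∀ p ∈ S, 0 ≤ p.1 ∧ p.1 ≤ (w : ℤ) ∧ 0 ≤ p.2 ∧ p.2 ≤ (h : ℤ)) :
    ∃ φ : ℤ × ℤ → ℤ × ℤ,
      (∀ p ∈ S, 0 ≤ (φ p).1 ∧ (φ p).1 ≤ 16 * (h : ℤ) ^ 4 * (w : ℤ) ^ 4 * ((n : ℤ) ^ 4 + n) ∧
        0 ≤ (φ p).2 ∧ (φ p).2 ≤ 16 * (h : ℤ) ^ 4 * (w : ℤ) ^ 4 * ((n : ℤ) ^ 4 + n)) ∧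
      (∀ p ∈ S, ∀ q ∈ S, ∀ r ∈ S, p ≠ q → p ≠ r → q ≠ r →
        iorientDet (φ p) (φ q) (φ r) ≠ 0) ∧
      (∀ p ∈ S, ∀ q ∈ S, ∀ r ∈ S, iorientDet p q r ≠ 0 →
        Int.sign (iorientDet (φ p) (φ q) (φ r)) = Int.sign (iorientDet p q r)) ∧
      (∀ p ∈ S, ∀ q ∈ S, p ≠ q → (φ p).1 ≠ (φ q).1 ∧ (φ p).2 ≠ (φ q).2) := by
  rcases Nat.eq_zero_or_pos n with rfl | hn
  · have hSe : S = ∅ := Finset.card_eq_zero.mp hcard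
    subst hSe
    exact ⟨id, by simp, by simp, by simp, by simp⟩
  -- nontrivial case
  have hwZ : (1:ℤ) ≤ (w:ℤ) := by exact_mod_cast hw
  have hhZ : (1:ℤ) ≤ (h:ℤ) := by exact_mod_cast hh
  have hnZ : (1:ℤ) ≤ (n:ℤ) := by exact_mod_cast hn
  set M : ℤ := 2*(w:ℤ)*(n:ℤ)^2 + 2*(h:ℤ)*(n:ℤ) + (n:ℤ)^3 + 1 with hMdef
  have hM1 : 1 ≤ M := by
    have : (0:ℤ) ≤ 2*(w:ℤ)*(n:ℤ)^2 + 2*(h:ℤ)*(n:ℤ) + (n:ℤ)^3 := by positivity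
    rw [hMdef]; linarith
  have hMn2 : (n:ℤ)^2 < M := by nlinarith
  have hMn : (n:ℤ) < M := by nlinarith
  -- index function
  let e := S.equivFin
  let idx : ℤ × ℤ → ℤ := fun p => if hp : p ∈ S then ((e ⟨p, hp⟩ : Fin S.card) : ℤ) else 0
  have hidx0 : ∀ p ∈ S, 0 ≤ idx p := by
    intro p hp
    simp only [idx, dif_pos hp]
    positivity
  have hidxlt : ∀ p ∈ S, idx p ≤ (n:ℤ) - 1 := by
    intro p hp
    simp only [idx, dif_pos hp]
    have h1 : (e ⟨p, hp⟩ : ℕ) < S.card := (e ⟨p, hp⟩).2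
    omega
  have hidxinj : ∀ p ∈ S, ∀ q ∈ S, p ≠ q → idx p ≠ idx q := by
    intro p hp q hq hne heq
    simp only [idx, dif_pos hp, dif_pos hq, Int.natCast_inj] at heq
    have : e ⟨p, hp⟩ = e ⟨q, hq⟩ := Fin.ext heq
    exact hne (congrArg Subtype.val (e.injective this))
  refine ⟨fun p => (M * p.1 + idx p, M * p.2 + (idx p)^2), ?_, ?_, ?_, ?_⟩
  · -- bounds
    intro p hp
    obtain ⟨h1, h2, h3, h4⟩ := hS p hp
    have hx1 : M * p.1 ≤ M * w := mul_le_mul_of_nonneg_left h2 (by linarith)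
    have hy1 : M * p.2 ≤ M * h := mul_le_mul_of_nonneg_left h4 (by linarith)
    have hia := hidx0 p hp
    have hib := hidxlt p hp
    have hsq : (idx p)^2 ≤ (n:ℤ)^2 := by nlinarith
    have hKx := keyIneq (w:ℤ) (h:ℤ) (n:ℤ) (w:ℤ) hwZ hhZ hnZ (by linarith) (Or.inl le_rfl)
    have hKy := keyIneq (w:ℤ) (h:ℤ) (n:ℤ) (h:ℤ) hwZ hhZ hnZ (by linarith) (Or.inr le_rfl)
    refine ⟨by positivity, ?_, by positivity, ?_⟩
    · have : idx p ≤ (n:ℤ)^2 := by nlinarith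
      calc M * p.1 + idx p ≤ M * w + (n:ℤ)^2 := by linarith
        _ ≤ 16*(h:ℤ)^4*(w:ℤ)^4*((n:ℤ)^4+(n:ℤ)) := by rw [hMdef] at *; linarith [hKx]
    · calc M * p.2 + (idx p)^2 ≤ M * h + (n:ℤ)^2 := by linarith
        _ ≤ 16*(h:ℤ)^4*(w:ℤ)^4*((n:ℤ)^4+(n:ℤ)) := by rw [hMdef] at *; linarith [hKy]
  · -- no three collinear
    intro p hp q hq r hr hpq hpr hqr
    have hexp := expandDet M (idx p) (idx q) (idx r) p q r
    have hEb := absELem (w:ℤ) (h:ℤ) (n:ℤ) (idx p) (idx q) (idx r) p q r (hS p hp) (hS q hq) (hS r hr)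
      ⟨hidx0 p hp, by linarith [hidxlt p hp]⟩ ⟨hidx0 q hq, by linarith [hidxlt q hq]⟩
      ⟨hidx0 r hr, by linarith [hidxlt r hr]⟩
    have hFb : |(idx q - idx p)*(idx r - idx p)*(idx r - idx q)| ≤ (n:ℤ)^3 := by
      have h1 : |idx q - idx p| ≤ (n:ℤ) := abs_le.mpr ⟨by linarith [hidx0 q hq, hidxlt p hp], by linarith [hidx0 p hp, hidxlt q hq]⟩
      have h2 : |idx r - idx p| ≤ (n:ℤ) := abs_le.mpr ⟨by linarith [hidx0 r hr, hidxlt p hp], by linarith [hidx0 p hp, hidxlt r hr]⟩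
      have h3 : |idx r - idx q| ≤ (n:ℤ) := abs_le.mpr ⟨by linarith [hidx0 r hr, hidxlt q hq], by linarith [hidx0 q hq, hidxlt r hr]⟩
      calc |(idx q - idx p)*(idx r - idx p)*(idx r - idx q)| ≤ ((n:ℤ)*(n:ℤ))*(n:ℤ) :=
            absMulLe (absMulLe h1 h2) h3
        _ = (n:ℤ)^3 := by ring
    have hF0 : (idx q - idx p)*(idx r - idx p)*(idx r - idx q) ≠ 0 := by
      have e1 : idx q - idx p ≠ 0 := sub_ne_zero.mpr (hidxinj p hp q hq hpq).symm
      have e2 : idx r - idx p ≠ 0 := sub_ne_zero.mpr (hidxinj p hp r hr hpr).symm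
      have e3 : idx r - idx q ≠ 0 := sub_ne_zero.mpr (hidxinj q hq r hr hqr).symm
      exact mul_ne_zero (mul_ne_zero e1 e2) e3
    have := (coreLem (2*(w:ℤ)*(n:ℤ)^2 + 2*(h:ℤ)*(n:ℤ)) ((n:ℤ)^3) M (iorientDet p q r) _ _
      (by positivity) (by positivity) hMdef hEb hFb hF0).1
    rw [hexp]
    exact this
  · -- sign preservation
    intro p hp q hq r hr hD
    have hpq : p ≠ q := fun hh => hD (by rw [hh]; exact degen1 q r)
    have hpr : p ≠ r := fun hh => hD (by rw [hh]; exact degen2 r q)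
    have hqr : q ≠ r := fun hh => hD (by rw [hh]; exact degen3 p r)
    have hexp := expandDet M (idx p) (idx q) (idx r) p q r
    have hEb := absELem (w:ℤ) (h:ℤ) (n:ℤ) (idx p) (idx q) (idx r) p q r (hS p hp) (hS q hq) (hS r hr)
      ⟨hidx0 p hp, by linarith [hidxlt p hp]⟩ ⟨hidx0 q hq, by linarith [hidxlt q hq]⟩
      ⟨hidx0 r hr, by linarith [hidxlt r hr]⟩
    have hFb : |(idx q - idx p)*(idx r - idx p)*(idx r - idx q)| ≤ (n:ℤ)^3 := by
      have h1 : |idx q - idx p| ≤ (n:ℤ) := abs_le.mpr ⟨by linarith [hidx0 q hq, hidxlt p hp], by linarith [hidx0 p hp, hidxlt q hq]⟩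
      have h2 : |idx r - idx p| ≤ (n:ℤ) := abs_le.mpr ⟨by linarith [hidx0 r hr, hidxlt p hp], by linarith [hidx0 p hp, hidxlt r hr]⟩
      have h3 : |idx r - idx q| ≤ (n:ℤ) := abs_le.mpr ⟨by linarith [hidx0 r hr, hidxlt q hq], by linarith [hidx0 q hq, hidxlt r hr]⟩
      calc |(idx q - idx p)*(idx r - idx p)*(idx r - idx q)| ≤ ((n:ℤ)*(n:ℤ))*(n:ℤ) :=
            absMulLe (absMulLe h1 h2) h3
        _ = (n:ℤ)^3 := by ring
    have hF0 : (idx q - idx p)*(idx r - idx p)*(idx r - idx q) ≠ 0 := by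
      have e1 : idx q - idx p ≠ 0 := sub_ne_zero.mpr (hidxinj p hp q hq hpq).symm
      have e2 : idx r - idx p ≠ 0 := sub_ne_zero.mpr (hidxinj p hp r hr hpr).symm
      have e3 : idx r - idx q ≠ 0 := sub_ne_zero.mpr (hidxinj q hq r hr hqr).symm
      exact mul_ne_zero (mul_ne_zero e1 e2) e3
    have hcore := (coreLem (2*(w:ℤ)*(n:ℤ)^2 + 2*(h:ℤ)*(n:ℤ)) ((n:ℤ)^3) M (iorientDet p q r) _ _
      (by positivity) (by positivity) hMdef hEb hFb hF0).2 hD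
    rw [hexp]
    exact hcore
  · -- distinct coordinates
    intro p hp q hq hpq
    have hinj := hidxinj p hp q hq hpq
    have hia := hidx0 p hp; have hib := hidxlt p hp
    have hja := hidx0 q hq; have hjb := hidxlt q hq
    constructor
    · intro heq
      simp only at heq
      rcases eq_or_ne p.1 q.1 with h1 | h1
      · rw [h1] at heq; exact hinj (by linarith)
      · have : M * (p.1 - q.1) = idx q - idx p := by linarith
        rcases lt_or_gt_of_ne h1 with hl | hl
        · have : M * (p.1 - q.1) ≤ M * (-1) := mul_le_mul_of_nonneg_left (by omega) (by linarith)
          omega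
        · have : M * 1 ≤ M * (p.1 - q.1) := mul_le_mul_of_nonneg_left (by omega) (by linarith)
          omega
    · intro heq
      simp only at heq
      rcases eq_or_ne p.2 q.2 with h1 | h1
      · rw [h1] at heq
        have : (idx p)^2 = (idx q)^2 := by linarith
        have habs : idx p = idx q := by nlinarith
        exact hinj habs
      · have : M * (p.2 - q.2) = (idx q)^2 - (idx p)^2 := by linarith
        have hsp : (idx p)^2 ≤ (n:ℤ)^2 ∧ 0 ≤ (idx p)^2 := ⟨by nlinarith, sq_nonneg _⟩
        have hsq : (idx q)^2 ≤ (n:ℤ)^2 ∧ 0 ≤ (idx q)^2 := ⟨by nlinarith, sq_nonneg _⟩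
        rcases lt_or_gt_of_ne h1 with hl | hl
        · have : M * (p.2 - q.2) ≤ M * (-1) := mul_le_mul_of_nonneg_left (by omega) (by linarith)
          nlinarith
        · have : M * 1 ≤ M * (p.2 - q.2) := mul_le_mul_of_nonneg_left (by omega) (by linarith)
          nlinarith
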